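/- In the setting of the generator identity for 𝓛_ε V, assume additionally that there are constants κ₀, C_A, c₀, c₁, C_U, C_σ > 0 such that for all x, y, ξ ∈ ℝ^d: ⟨A(y)ξ, ξ⟩ ≥ κ₀·|ξ|²; |Σ_{i,j=1}^d x_i·x_j·∂_{y_j}(𝒜_h)_i(y)| ≤ C_A·|x|²; ⟨𝒜_h(y), ∇U(y)⟩ ≥ c₀·|y|² + c₁·U(y) − C_U; U(y) ≥ 0; and tr(σ(y)σ(y)ᵀ) ≤ C_σ. Then for every η ∈ (0, κ₀/C_A], setting c := min(κ₀, η·c₀, η·c₁) > 0 and C := η·C_U + 2·C_σ, one has for all ε ∈ (0,1) and all (x,y) ∈ ℝ^d × ℝ^d: 𝓛_ε V(x,y) ≤ −c·(|x|² + |y|² + U(y)) + C. -/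

import Mathlib

noncomputable section

open Matrix

/-- The `i`-th standard basis vector of `ℝ^d`. -/
def esingle {d : ℕ} (i : Fin d) : EuclideanSpace ℝ (Fin d) :=
  EuclideanSpace.single i 1

/-- The generator of the kinetic (Smoluchowski–Kramers) system:
`𝓛_ε f(x,y) = ε^{−2}[tr(σ(y)σ(y)ᵀ ∇ₓ²f) − ⟨A(y)x, ∇ₓf⟩]
  + ε^{−1}[⟨x, ∇_y f⟩ − ⟨∇U(y), ∇ₓf⟩]`. -/
def LKin {d m : ℕ}
    (A : EuclideanSpace ℝ (Fin d) → Matrix (Fin d) (Fin d) ℝ)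
    (σ : EuclideanSpace ℝ (Fin d) → Matrix (Fin d) (Fin m) ℝ)
    (U : EuclideanSpace ℝ (Fin d) → ℝ) (ε : ℝ)
    (f : EuclideanSpace ℝ (Fin d) → EuclideanSpace ℝ (Fin d) → ℝ)
    (x y : EuclideanSpace ℝ (Fin d)) : ℝ :=
  (ε ^ 2)⁻¹ *
      ((∑ i, ∑ j, (σ y * (σ y)ᵀ) i j *
          iteratedFDeriv ℝ 2 (fun x' => f x' y) x ![esingle j, esingle i])
        - ∑ i, (∑ j, A y i j * x j) * fderiv ℝ (fun x' => f x' y) x (esingle i))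
    + ε⁻¹ *
      ((∑ i, x i * fderiv ℝ (fun y' => f x y') y (esingle i))
        - ∑ i, fderiv ℝ U y (esingle i) * fderiv ℝ (fun x' => f x' y) x (esingle i))

/-- The Lyapunov function
`V(x,y) = ε²(|x|² + 2U(y)) + ηε⟨x, 𝒜(y)⟩ + ηh(y) + 1`. -/
def Vfun {d : ℕ} (U h : EuclideanSpace ℝ (Fin d) → ℝ)
    (𝒜 : EuclideanSpace ℝ (Fin d) → EuclideanSpace ℝ (Fin d)) (ε η : ℝ)
    (x y : EuclideanSpace ℝ (Fin d)) : ℝ :=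
  ε ^ 2 * (‖x‖ ^ 2 + 2 * U y) + η * ε * (∑ i, x i * 𝒜 y i) + η * h y + 1

section Aux
open RealInnerProductSpace
variable {d : ℕ}

lemma sq_hasFDeriv (x : EuclideanSpace ℝ (Fin d)) :
    HasFDerivAt (fun x' : EuclideanSpace ℝ (Fin d) => ⟪x', x'⟫) ((2:ℝ) • (innerSL ℝ x)) x := by
  have h := (hasFDerivAt_id x).inner ℝ (hasFDerivAt_id x)
  refine h.congr_fderiv ?_
  ext v
  simp [fderivInnerCLM_apply, real_inner_comm, two_mul, mul_comm, innerSL_apply_apply]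

lemma Vx_hasFDeriv (U h : EuclideanSpace ℝ (Fin d) → ℝ) (𝒜 : EuclideanSpace ℝ (Fin d) → EuclideanSpace ℝ (Fin d))
    (ε η : ℝ) (y x : EuclideanSpace ℝ (Fin d)) :
    HasFDerivAt (fun x' => Vfun U h 𝒜 ε η x' y)
      ((2 * ε ^ 2) • (innerSL ℝ x) + (η * ε) • (innerSL ℝ (𝒜 y))) x := by
  have hfun : (fun x' => Vfun U h 𝒜 ε η x' y)
      = fun x' : EuclideanSpace ℝ (Fin d) =>
        ε ^ 2 * ⟪x', x'⟫ + η * ε * ⟪𝒜 y, x'⟫ + (ε ^ 2 * (2 * U y) + η * h y + 1) := by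
    funext x'
    have h1 : ⟪x', x'⟫ = ‖x'‖ ^ 2 := real_inner_self_eq_norm_sq x'
    have h2 : ⟪𝒜 y, x'⟫ = ∑ i, x' i * 𝒜 y i := by
      simp [PiLp.inner_apply, RCLike.inner_apply, mul_comm]
    rw [Vfun, h1, h2]; ring
  rw [hfun]
  have := (((sq_hasFDeriv x).const_mul (ε ^ 2)).add
    (((innerSL ℝ (𝒜 y)).hasFDerivAt).const_mul (η * ε))).add_const
    (ε ^ 2 * (2 * U y) + η * h y + 1)
  refine this.congr_fderiv ?_
  ext v
  simp only [ContinuousLinearMap.add_apply, ContinuousLinearMap.smul_apply, smul_eq_mul,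
    ContinuousLinearMap.coe_smul', Pi.smul_apply, innerSL_apply_apply]
  ring

lemma Vx_fderiv_apply (U h : EuclideanSpace ℝ (Fin d) → ℝ) (𝒜 : EuclideanSpace ℝ (Fin d) → EuclideanSpace ℝ (Fin d))
    (ε η : ℝ) (y x : EuclideanSpace ℝ (Fin d)) (i : Fin d) :
    fderiv ℝ (fun x' => Vfun U h 𝒜 ε η x' y) x (esingle i)
      = 2 * ε ^ 2 * x i + η * ε * 𝒜 y i := by
  rw [(Vx_hasFDeriv U h 𝒜 ε η y x).fderiv]
  simp [esingle, EuclideanSpace.inner_single_right]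

lemma Vx_iter2 (U h : EuclideanSpace ℝ (Fin d) → ℝ) (𝒜 : EuclideanSpace ℝ (Fin d) → EuclideanSpace ℝ (Fin d))
    (ε η : ℝ) (y x : EuclideanSpace ℝ (Fin d)) (i j : Fin d) :
    iteratedFDeriv ℝ 2 (fun x' => Vfun U h 𝒜 ε η x' y) x ![esingle j, esingle i]
      = 2 * ε ^ 2 * (if i = j then 1 else 0) := by
  rw [iteratedFDeriv_two_apply]
  have hfd : fderiv ℝ (fun x' => Vfun U h 𝒜 ε η x' y)
      = fun x => (2 * ε ^ 2) • (innerSL ℝ x) + (η * ε) • (innerSL ℝ (𝒜 y)) :=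
    funext fun x => (Vx_hasFDeriv U h 𝒜 ε η y x).fderiv
  rw [hfd]
  have h2 : HasFDerivAt (fun x : EuclideanSpace ℝ (Fin d) =>
      (2 * ε ^ 2) • (innerSL ℝ x) + (η * ε) • (innerSL ℝ (𝒜 y)))
      ((2 * ε ^ 2) • (innerSL ℝ : EuclideanSpace ℝ (Fin d) →L[ℝ] EuclideanSpace ℝ (Fin d) →L[ℝ] ℝ)) x := by
    exact ((innerSL ℝ : EuclideanSpace ℝ (Fin d) →L[ℝ] EuclideanSpace ℝ (Fin d) →L[ℝ] ℝ).hasFDerivAt.const_smul (2 * ε ^ 2)).add_const _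
  rw [h2.fderiv]
  simp [esingle, EuclideanSpace.inner_single_left, EuclideanSpace.single_apply, eq_comm, innerSL_apply_apply]
  rw [innerSL_apply_apply]
  simp [EuclideanSpace.inner_single_left, EuclideanSpace.single_apply, eq_comm]

lemma Vy_fderiv_apply (U h : EuclideanSpace ℝ (Fin d) → ℝ) (𝒜 : EuclideanSpace ℝ (Fin d) → EuclideanSpace ℝ (Fin d))
    (hU : Differentiable ℝ U) (hh : Differentiable ℝ h) (h𝒜diff : Differentiable ℝ 𝒜)
    (ε η : ℝ) (x y : EuclideanSpace ℝ (Fin d)) (i : Fin d) :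
    fderiv ℝ (fun y' => Vfun U h 𝒜 ε η x y') y (esingle i)
      = 2 * ε ^ 2 * fderiv ℝ U y (esingle i)
        + η * ε * (∑ j, x j * fderiv ℝ (fun y' => 𝒜 y' j) y (esingle i))
        + η * fderiv ℝ h y (esingle i) := by
  have hcoord : ∀ j, fderiv ℝ (fun y' => 𝒜 y' j) y (esingle i)
      = (fderiv ℝ 𝒜 y (esingle i)) j := by
    intro j
    have hc := ((EuclideanSpace.proj (𝕜 := ℝ) j).hasFDerivAt.comp y (h𝒜diff y).hasFDerivAt).fderiv
    rw [show (fun y' => 𝒜 y' j) = (⇑(EuclideanSpace.proj (𝕜 := ℝ) j) ∘ 𝒜) from rfl, hc]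
    rfl
  have hinner : HasFDerivAt (fun y' => ⟪x, 𝒜 y'⟫)
      ((innerSL ℝ x).comp (fderiv ℝ 𝒜 y)) y :=
    ((innerSL ℝ x).hasFDerivAt.comp y (h𝒜diff y).hasFDerivAt)
  have hfun : (fun y' => Vfun U h 𝒜 ε η x y')
      = fun y' => 2 * ε ^ 2 * U y' + η * ε * ⟪x, 𝒜 y'⟫ + η * h y' + (ε ^ 2 * ‖x‖ ^ 2 + 1) := by
    funext y'
    have h2 : ⟪x, 𝒜 y'⟫ = ∑ j, x j * 𝒜 y' j := by
      simp [PiLp.inner_apply, RCLike.inner_apply, mul_comm]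
    rw [Vfun, h2]; ring
  have hder : HasFDerivAt (fun y' => Vfun U h 𝒜 ε η x y')
      ((2 * ε ^ 2) • fderiv ℝ U y + (η * ε) • ((innerSL ℝ x).comp (fderiv ℝ 𝒜 y))
        + η • fderiv ℝ h y) y := by
    rw [hfun]
    have := ((((hU y).hasFDerivAt.const_mul (2 * ε ^ 2)).add
      (hinner.const_mul (η * ε))).add ((hh y).hasFDerivAt.const_mul η)).add_const
      (ε ^ 2 * ‖x‖ ^ 2 + 1)
    exact this
  rw [hder.fderiv]
  have : ⟪x, fderiv ℝ 𝒜 y (esingle i)⟫ = ∑ j, x j * fderiv ℝ 𝒜 y (esingle i) j := by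
    simp [PiLp.inner_apply, RCLike.inner_apply, mul_comm]
  simp only [ContinuousLinearMap.add_apply, ContinuousLinearMap.smul_apply, smul_eq_mul,
    ContinuousLinearMap.comp_apply, innerSL_apply_apply, this]
  simp only [hcoord]

lemma matrix_cancel (A : EuclideanSpace ℝ (Fin d) → Matrix (Fin d) (Fin d) ℝ)
    (hAinv : ∀ y, IsUnit (A y)) (h : EuclideanSpace ℝ (Fin d) → ℝ)
    (𝒜 : EuclideanSpace ℝ (Fin d) → EuclideanSpace ℝ (Fin d))
    (h𝒜def : ∀ y i, 𝒜 y i = ∑ j, (A y)⁻¹ j i * fderiv ℝ h y (esingle j))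
    (x y : EuclideanSpace ℝ (Fin d)) :
    ∑ i, (∑ j, A y i j * x j) * 𝒜 y i = ∑ i, x i * fderiv ℝ h y (esingle i) := by
  have hdet : IsUnit (A y).det := (Matrix.isUnit_iff_isUnit_det (A y)).mp (hAinv y)
  have hinvA : (A y)⁻¹ * A y = 1 := Matrix.nonsing_inv_mul (A y) hdet
  calc ∑ i, (∑ j, A y i j * x j) * 𝒜 y i
      = ∑ i, ∑ k, (∑ j, A y i j * x j) * ((A y)⁻¹ k i * fderiv ℝ h y (esingle k)) := by
        refine Finset.sum_congr rfl fun i _ => ?_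
        rw [h𝒜def y i, Finset.mul_sum]
    _ = ∑ k, ∑ i, (∑ j, A y i j * x j) * ((A y)⁻¹ k i * fderiv ℝ h y (esingle k)) :=
        Finset.sum_comm
    _ = ∑ k, (∑ j, (∑ i, (A y)⁻¹ k i * A y i j) * x j) * fderiv ℝ h y (esingle k) := by
        refine Finset.sum_congr rfl fun k _ => ?_
        simp only [Finset.sum_mul, Finset.mul_sum]
        rw [Finset.sum_comm]
        exact Finset.sum_congr rfl fun i _ => Finset.sum_congr rfl fun j _ => by ring
    _ = ∑ k, x k * fderiv ℝ h y (esingle k) := by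
        refine Finset.sum_congr rfl fun k _ => ?_
        have : ∀ j, (∑ i, (A y)⁻¹ k i * A y i j) = if k = j then 1 else 0 := by
          intro j
          have := congrArg (fun M => M k j) hinvA
          simpa [Matrix.mul_apply, Matrix.one_apply] using this
        simp [this]

end Aux

/-- Uniform-in-`ε` Lyapunov drift estimate for the kinetic generator:
under coercivity of `A`, a bound on the derivative of `𝒜`, coercivity of
`⟨𝒜, ∇U⟩`, nonnegativity of `U` and a trace bound on `σσᵀ`,
`𝓛_ε V ≤ −c(|x|² + |y|² + U(y)) + C` with constants independent of `ε ∈ (0,1)`. -/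
theorem LKin_V_drift_bound {d m : ℕ}
    (A : EuclideanSpace ℝ (Fin d) → Matrix (Fin d) (Fin d) ℝ)
    (hAinv : ∀ y, IsUnit (A y))
    (σ : EuclideanSpace ℝ (Fin d) → Matrix (Fin d) (Fin m) ℝ)
    (U h : EuclideanSpace ℝ (Fin d) → ℝ)
    (hU : Differentiable ℝ U) (hh : Differentiable ℝ h)
    (𝒜 : EuclideanSpace ℝ (Fin d) → EuclideanSpace ℝ (Fin d))
    (h𝒜def : ∀ y i, 𝒜 y i = ∑ j, (A y)⁻¹ j i * fderiv ℝ h y (esingle j))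
    (h𝒜diff : Differentiable ℝ 𝒜)
    (κ₀ C_A c₀ c₁ C_U C_σ : ℝ)
    (hκ₀ : 0 < κ₀) (hCA : 0 < C_A) (hc₀ : 0 < c₀) (hc₁ : 0 < c₁)
    (hCU : 0 < C_U) (hCσ : 0 < C_σ)
    (hcoerc : ∀ (y : EuclideanSpace ℝ (Fin d)) (ξ : EuclideanSpace ℝ (Fin d)),
      κ₀ * ‖ξ‖ ^ 2 ≤ ∑ i, (∑ j, A y i j * ξ j) * ξ i)
    (hquad : ∀ x y : EuclideanSpace ℝ (Fin d),
      |∑ i, ∑ j, x i * x j * fderiv ℝ (fun y' => 𝒜 y' i) y (esingle j)| ≤ C_A * ‖x‖ ^ 2)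
    (hAU : ∀ y : EuclideanSpace ℝ (Fin d),
      c₀ * ‖y‖ ^ 2 + c₁ * U y - C_U ≤ ∑ i, 𝒜 y i * fderiv ℝ U y (esingle i))
    (hU0 : ∀ y, 0 ≤ U y)
    (hσtr : ∀ y : EuclideanSpace ℝ (Fin d), ∑ i, (σ y * (σ y)ᵀ) i i ≤ C_σ) :
    ∀ η : ℝ, 0 < η → η ≤ κ₀ / C_A →
      ∀ ε : ℝ, 0 < ε → ε < 1 →
        ∀ x y : EuclideanSpace ℝ (Fin d),
          LKin A σ U ε (Vfun U h 𝒜 ε η) x y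
            ≤ -(min κ₀ (min (η * c₀) (η * c₁))) * (‖x‖ ^ 2 + ‖y‖ ^ 2 + U y)
              + (η * C_U + 2 * C_σ) := by
  intro η hη hηle ε hε hε1 x y
  have hεne : ε ≠ 0 := ne_of_gt hε
  set T : ℝ := ∑ i, (σ y * (σ y)ᵀ) i i with hTdef
  set SA : ℝ := ∑ i, (∑ j, A y i j * x j) * x i with hSAdef
  set P : ℝ := ∑ i, 𝒜 y i * fderiv ℝ U y (esingle i) with hPdef
  set G : ℝ := ∑ i, x i * fderiv ℝ U y (esingle i) with hGdef
  set X : ℝ := ∑ i, x i * fderiv ℝ h y (esingle i) with hXdef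
  set Q : ℝ := ∑ i, x i * (∑ j, x j * fderiv ℝ (fun y' => 𝒜 y' j) y (esingle i)) with hQdef
  have htr : (∑ i, ∑ j, (σ y * (σ y)ᵀ) i j *
      iteratedFDeriv ℝ 2 (fun x' => Vfun U h 𝒜 ε η x' y) x ![esingle j, esingle i])
      = 2 * ε ^ 2 * T := by
    simp only [Vx_iter2]
    rw [hTdef, Finset.mul_sum]
    refine Finset.sum_congr rfl fun i _ => ?_
    simp [mul_ite, Finset.sum_ite_eq, mul_comm]
  have hAx : (∑ i, (∑ j, A y i j * x j) * fderiv ℝ (fun x' => Vfun U h 𝒜 ε η x' y) x (esingle i))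
      = 2 * ε ^ 2 * SA + η * ε * X := by
    simp only [Vx_fderiv_apply]
    rw [hSAdef, hXdef, ← matrix_cancel A hAinv h 𝒜 h𝒜def x y, Finset.mul_sum, Finset.mul_sum,
      ← Finset.sum_add_distrib]
    exact Finset.sum_congr rfl fun i _ => by ring
  have hyd : (∑ i, x i * fderiv ℝ (fun y' => Vfun U h 𝒜 ε η x y') y (esingle i))
      = 2 * ε ^ 2 * G + η * ε * Q + η * X := by
    simp only [Vy_fderiv_apply U h 𝒜 hU hh h𝒜diff]
    rw [hGdef, hQdef, hXdef, Finset.mul_sum, Finset.mul_sum, Finset.mul_sum,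
      ← Finset.sum_add_distrib, ← Finset.sum_add_distrib]
    exact Finset.sum_congr rfl fun i _ => by ring
  have hUd : (∑ i, fderiv ℝ U y (esingle i) * fderiv ℝ (fun x' => Vfun U h 𝒜 ε η x' y) x (esingle i))
      = 2 * ε ^ 2 * G + η * ε * P := by
    simp only [Vx_fderiv_apply]
    rw [hGdef, hPdef, Finset.mul_sum, Finset.mul_sum, ← Finset.sum_add_distrib]
    exact Finset.sum_congr rfl fun i _ => by ring
  have key : LKin A σ U ε (Vfun U h 𝒜 ε η) x y = 2 * T - 2 * SA + η * Q - η * P := by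
    rw [LKin, htr, hAx, hyd, hUd]
    field_simp
    ring
  rw [key]
  -- bounds
  have hQeq : Q = ∑ i, ∑ j, x i * x j * fderiv ℝ (fun y' => 𝒜 y' i) y (esingle j) := by
    rw [hQdef]
    simp only [Finset.mul_sum]
    rw [Finset.sum_comm]
    exact Finset.sum_congr rfl fun j _ => Finset.sum_congr rfl fun i _ => by ring
  have hQle : Q ≤ C_A * ‖x‖ ^ 2 := by
    rw [hQeq]; exact (abs_le.mp (hquad x y)).2
  have hηCA : η * C_A ≤ κ₀ := (le_div_iff₀ hCA).mp hηle
  have h1 : η * Q ≤ κ₀ * ‖x‖ ^ 2 :=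
    calc η * Q ≤ η * (C_A * ‖x‖ ^ 2) := mul_le_mul_of_nonneg_left hQle hη.le
      _ = (η * C_A) * ‖x‖ ^ 2 := by ring
      _ ≤ κ₀ * ‖x‖ ^ 2 := mul_le_mul_of_nonneg_right hηCA (sq_nonneg _)
  have h2' : η * c₀ * ‖y‖ ^ 2 + η * c₁ * U y - η * C_U ≤ η * P := by
    have hm := mul_le_mul_of_nonneg_left (hAU y) hη.le
    calc η * c₀ * ‖y‖ ^ 2 + η * c₁ * U y - η * C_U
        = η * (c₀ * ‖y‖ ^ 2 + c₁ * U y - C_U) := by ring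
      _ ≤ η * P := hm
  have hSAge : κ₀ * ‖x‖ ^ 2 ≤ SA := hcoerc y x
  have hTle : T ≤ C_σ := hσtr y
  have e4 : min κ₀ (min (η * c₀) (η * c₁)) * ‖x‖ ^ 2 ≤ κ₀ * ‖x‖ ^ 2 :=
    mul_le_mul_of_nonneg_right (min_le_left _ _) (sq_nonneg _)
  have e5 : min κ₀ (min (η * c₀) (η * c₁)) * ‖y‖ ^ 2 ≤ η * c₀ * ‖y‖ ^ 2 :=
    mul_le_mul_of_nonneg_right ((min_le_right _ _).trans (min_le_left _ _)) (sq_nonneg _)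
  have e6 : min κ₀ (min (η * c₀) (η * c₁)) * U y ≤ η * c₁ * U y :=
    mul_le_mul_of_nonneg_right ((min_le_right _ _).trans (min_le_right _ _)) (hU0 y)
  nlinarith [h1, h2', hSAge, hTle, e4, e5, e6]
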